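/- Let M° : H_S° → H_R° be a linear map between finite-dimensional Hilbert spaces decomposed as H_S° = ⊕_p H_{S,p}°, H_R° = ⊕_p H_{R,p}° over a finite set P, and define φ_p(h) = tr((M°* P_{R,p} M° − P_{S,p}) h h*) on C₂(H_S°). If there is a unit Hilbert-Schmidt operator h with φ_p(h) ≥ 0 for every p, then there exists a block-diagonal contraction Δ = diag_p Δ_p, with Δ_p a contraction from C₂(H_S°, H_{R,p}°) to C₂(H_S°, H_{S,p}°), such that Δ(L_{M°} h) = (P_{S,p} h)_p, i.e. (I − Δ L_{M°}) h = 0; hence I − Δ L_{M°} is not invertible. -/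

import Mathlib

open Matrix

lemma trace_proj_mul_self {P : Type*} [Fintype P] [DecidableEq P] {d : P → ℕ}
    {n : Type*} [Fintype n] (p : P) (N : Matrix (Σ q : P, Fin (d q)) n ℂ) :
    ((Matrix.diagonal (fun i : Σ q : P, Fin (d q) => if i.1 = p then (1:ℂ) else 0))
      * (N * Nᴴ)).trace
    = ∑ a : Fin (d p), ∑ j : n, (‖N ⟨p,a⟩ j‖ : ℂ)^2 := by
  classical
  have : ∀ i : Σ q : P, Fin (d q), (N * Nᴴ) i i = ∑ j : n, (‖N i j‖ : ℂ)^2 := by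
    intro i
    simp [Matrix.mul_apply, Matrix.conjTranspose_apply, Complex.mul_conj,
      Complex.normSq_eq_norm_sq]
  simp only [Matrix.trace, Matrix.diag, Matrix.diagonal_mul, this, ite_mul, one_mul, zero_mul]
  rw [← Finset.univ_sigma_univ, Finset.sum_sigma]
  simp [Finset.sum_ite_eq]
  rw [Finset.sum_eq_single p (fun b _ hb => by simp [hb]) (by simp)]
  simp


set_option maxHeartbeats 1000000 in
set_option synthInstance.maxHeartbeats 1000000 in
/-- If some unit Hilbert–Schmidt operator `h` satisfies `φ_p(h) ≥ 0` for every
`p`, then there is a block-diagonal contraction `Δ = diag_p Δ_p` — each `Δ_p` a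
contraction from `C₂(H_S°, H_{R,p}°)` to `C₂(H_S°, H_{S,p}°)` (realized as
Euclidean spaces of matrix blocks) — with `Δ(L_{M°} h) = (P_{S,p} h)_p`, i.e.
`(I − Δ L_{M°}) h = 0`; hence `I − Δ L_{M°}` is not invertible. -/
theorem nonneg_phi_gives_noninvertible
    {P : Type*} [Fintype P] [DecidableEq P] (dS dR : P → ℕ)
    (M : Matrix (Σ p : P, Fin (dR p)) (Σ p : P, Fin (dS p)) ℂ)
    (h : Matrix (Σ p : P, Fin (dS p)) (Σ p : P, Fin (dS p)) ℂ)
    (hnorm : (hᴴ * h).trace = 1)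
    (hphi : ∀ p : P, 0 ≤
      ((Mᴴ * Matrix.diagonal (fun i : Σ p : P, Fin (dR p) => if i.1 = p then (1:ℂ) else 0) * M
        - Matrix.diagonal (fun i : Σ p : P, Fin (dS p) => if i.1 = p then (1:ℂ) else 0))
        * (h * hᴴ)).trace.re) :
    ∃ Δ : ∀ p : P, EuclideanSpace ℂ (Fin (dR p) × (Σ p : P, Fin (dS p))) →L[ℂ]
        EuclideanSpace ℂ (Fin (dS p) × (Σ p : P, Fin (dS p))),
      (∀ p, ‖Δ p‖ ≤ 1) ∧
      (∀ (p : P) (y : Fin (dS p) × (Σ p : P, Fin (dS p))),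
        Δ p (WithLp.toLp 2 (fun x => (M * h) ⟨p, x.1⟩ x.2)) y = h ⟨p, y.1⟩ y.2) ∧
      ¬ Function.Injective
        (fun (g : Matrix (Σ p : P, Fin (dS p)) (Σ p : P, Fin (dS p)) ℂ) =>
          (fun (y : Σ p : P, Fin (dS p)) (j : Σ p : P, Fin (dS p)) =>
            g y j - Δ y.1 (WithLp.toLp 2 (fun x => (M * g) ⟨y.1, x.1⟩ x.2)) (y.2, j)
            : Matrix (Σ p : P, Fin (dS p)) (Σ p : P, Fin (dS p)) ℂ)) := by
  classical
  set v : ∀ p : P, EuclideanSpace ℂ (Fin (dR p) × (Σ p : P, Fin (dS p))) :=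
    fun p => WithLp.toLp 2 (fun x => (M * h) ⟨p, x.1⟩ x.2) with hv
  set w : ∀ p : P, EuclideanSpace ℂ (Fin (dS p) × (Σ p : P, Fin (dS p))) :=
    fun p => WithLp.toLp 2 (fun y => h ⟨p, y.1⟩ y.2) with hw
  -- norms as entry sums
  have normv : ∀ p, ‖v p‖^2 = ∑ a : Fin (dR p), ∑ j : (Σ p : P, Fin (dS p)),
      ‖(M * h) ⟨p,a⟩ j‖^2 := by
    intro p
    rw [EuclideanSpace.norm_eq, Real.sq_sqrt (by positivity)]
    exact Fintype.sum_prod_type (f := fun x => ‖(M * h) ⟨p, x.1⟩ x.2‖^2)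
  have normw : ∀ p, ‖w p‖^2 = ∑ a : Fin (dS p), ∑ j : (Σ p : P, Fin (dS p)),
      ‖h ⟨p,a⟩ j‖^2 := by
    intro p
    rw [EuclideanSpace.norm_eq, Real.sq_sqrt (by positivity)]
    exact Fintype.sum_prod_type (f := fun x => ‖h ⟨p, x.1⟩ x.2‖^2)
  -- the key inequality
  have key : ∀ p, ‖w p‖ ≤ ‖v p‖ := by
    intro p
    have h1 : (Mᴴ * Matrix.diagonal (fun i : Σ p : P, Fin (dR p) => if i.1 = p then (1:ℂ) else 0)
        * M * (h * hᴴ)).trace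
        = ∑ a : Fin (dR p), ∑ j : (Σ p : P, Fin (dS p)), (‖(M*h) ⟨p,a⟩ j‖ : ℂ)^2 := by
      rw [show Mᴴ * Matrix.diagonal (fun i : Σ p : P, Fin (dR p) => if i.1 = p then (1:ℂ) else 0)
        * M * (h * hᴴ)
        = Mᴴ * (Matrix.diagonal (fun i : Σ p : P, Fin (dR p) => if i.1 = p then (1:ℂ) else 0)
          * M * (h * hᴴ)) by simp only [Matrix.mul_assoc]]
      rw [Matrix.trace_mul_comm]
      rw [show Matrix.diagonal (fun i : Σ p : P, Fin (dR p) => if i.1 = p then (1:ℂ) else 0)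
        * M * (h * hᴴ) * Mᴴ
        = Matrix.diagonal (fun i : Σ p : P, Fin (dR p) => if i.1 = p then (1:ℂ) else 0)
          * ((M * h) * (M * h)ᴴ) by
          simp only [Matrix.conjTranspose_mul, Matrix.mul_assoc]]
      exact trace_proj_mul_self p (M * h)
    have h2 : (Matrix.diagonal (fun i : Σ p : P, Fin (dS p) => if i.1 = p then (1:ℂ) else 0)
        * (h * hᴴ)).trace
        = ∑ a : Fin (dS p), ∑ j : (Σ p : P, Fin (dS p)), (‖h ⟨p,a⟩ j‖ : ℂ)^2 :=
      trace_proj_mul_self (d := dS) p h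
    have h3 := hphi p
    rw [Matrix.sub_mul, Matrix.trace_sub, Complex.sub_re, h1, h2] at h3
    have e1 : (∑ a : Fin (dR p), ∑ j : (Σ p : P, Fin (dS p)), (‖(M*h) ⟨p,a⟩ j‖ : ℂ)^2).re
        = ‖v p‖^2 := by
      rw [normv p, Complex.re_sum]
      refine Finset.sum_congr rfl fun a _ => ?_
      rw [Complex.re_sum]
      refine Finset.sum_congr rfl fun j _ => ?_
      rw [← Complex.ofReal_pow, Complex.ofReal_re]
    have e2 : (∑ a : Fin (dS p), ∑ j : (Σ p : P, Fin (dS p)), (‖h ⟨p,a⟩ j‖ : ℂ)^2).re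
        = ‖w p‖^2 := by
      rw [normw p, Complex.re_sum]
      refine Finset.sum_congr rfl fun a _ => ?_
      rw [Complex.re_sum]
      refine Finset.sum_congr rfl fun j _ => ?_
      rw [← Complex.ofReal_pow, Complex.ofReal_re]
    rw [e1, e2] at h3
    have hsq : ‖w p‖^2 ≤ ‖v p‖^2 := by linarith
    have := Real.sqrt_le_sqrt hsq
    rwa [Real.sqrt_sq (norm_nonneg _), Real.sqrt_sq (norm_nonneg _)] at this
  -- the block maps
  set Δ : ∀ p : P, EuclideanSpace ℂ (Fin (dR p) × (Σ p : P, Fin (dS p))) →L[ℂ]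
      EuclideanSpace ℂ (Fin (dS p) × (Σ p : P, Fin (dS p))) :=
    fun p => if hvp : v p = 0 then 0 else
      ((innerSL ℂ (v p)).smulRight (((‖v p‖^2 : ℝ) : ℂ)⁻¹ • w p)) with hΔ
  have hcontr : ∀ p, ‖Δ p‖ ≤ 1 := by
    intro p
    rw [hΔ]
    by_cases hvp : v p = 0
    · simp [hvp]
    · simp only [dif_neg hvp]
      have hvpos : (0:ℝ) < ‖v p‖ := norm_pos_iff.mpr hvp
      calc ‖(innerSL ℂ (v p)).smulRight (((‖v p‖^2 : ℝ) : ℂ)⁻¹ • w p)‖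
          = ‖v p‖ * ‖((‖v p‖^2 : ℝ) : ℂ)⁻¹ • w p‖ := by
            rw [ContinuousLinearMap.norm_smulRight_apply, innerSL_apply_norm]
        _ = ‖v p‖ * ((‖v p‖^2)⁻¹ * ‖w p‖) := by
            rw [norm_smul, norm_inv]
            norm_num
        _ = ‖w p‖ / ‖v p‖ := by field_simp
        _ ≤ 1 := by
            rw [div_le_one hvpos]
            exact key p
  have hfix : ∀ (p : P) (y : Fin (dS p) × (Σ p : P, Fin (dS p))),
      Δ p (WithLp.toLp 2 (fun x => (M * h) ⟨p, x.1⟩ x.2)) y = h ⟨p, y.1⟩ y.2 := by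
    intro p y
    rw [hΔ]
    by_cases hvp : v p = 0
    · have hw0 : ‖w p‖ = 0 := le_antisymm (by simpa [hvp] using key p) (norm_nonneg _)
      have hw0' : w p = 0 := norm_eq_zero.mp hw0
      have hy : h ⟨p, y.1⟩ y.2 = 0 := by
        have := congrArg (fun f => f y) hw0'
        simpa [hw] using this
      simp only [dif_pos hvp, hy]
      rfl
    · simp only [dif_neg hvp]
      have hvv : WithLp.toLp 2 (fun x => (M * h) ⟨p, x.1⟩ x.2) = v p := rfl
      rw [hvv]
      have hne : ((‖v p‖^2 : ℝ) : ℂ) ≠ 0 := by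
        simp only [ne_eq, Complex.ofReal_eq_zero]
        exact pow_ne_zero 2 (ne_of_gt (norm_pos_iff.mpr hvp))
      have happ : ((innerSL ℂ (v p)).smulRight (((‖v p‖^2 : ℝ) : ℂ)⁻¹ • w p)) (v p)
          = w p := by
        have hinner : (inner ℂ (v p) (v p) : ℂ) = ((‖v p‖^2 : ℝ) : ℂ) := by
          rw [inner_self_eq_norm_sq_to_K]
          norm_cast
        simp only [ContinuousLinearMap.smulRight_apply, innerSL_apply_apply, hinner, smul_smul,
          mul_inv_cancel₀ hne, one_smul]
      exact congrArg (fun f => f y) happ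
  refine ⟨Δ, hcontr, hfix, ?_⟩
  intro hinj
  have hh0 : h = 0 := by
    apply hinj
    funext y j
    simp only
    have hMz : WithLp.toLp 2 (fun x => (M * (0 : Matrix (Σ p : P, Fin (dS p)) (Σ p : P, Fin (dS p)) ℂ))
        ⟨y.1, x.1⟩ x.2) = (0 : EuclideanSpace ℂ (Fin (dR y.1) × (Σ p : P, Fin (dS p)))) := by
      ext x; simp
    rw [hMz, map_zero]
    have := hfix y.1 (y.2, j)
    simp only at this
    rw [this]
    simp [Sigma.eta]
  rw [hh0] at hnorm
  simp at hnorm
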